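/- Let Γ be an m-regular graph and let u be an eigenvector of the adjacency matrix of Γ with eigenvalue θ taking exactly two distinct values a₀ and a₁ on the vertex set, with associated partition {C, C̄}. Then every vertex of C has the same number β₀ of neighbors in C̄, and every vertex of C̄ has the same number γ₁ of neighbors in C; i.e., C is a completely regular code with covering radius 1. -/
import Mathlib


/-- In an `m`-regular graph, if an eigenvector `u` with eigenvalue `θ`
takes exactly two distinct values `a₀`, `a₁`, then the associated two-part partition
is equitable: every vertex with value `a₀` has the same number `β₀` of neighbors with
value `a₁`, and every vertex with value `a₁` has the same number `γ₁` of neighbors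
with value `a₀`. -/
theorem stmt0 {V : Type*} [Fintype V] (G : SimpleGraph V) (m : ℕ)
    (hreg : ∀ v : V, {w | G.Adj v w}.ncard = m)
    (θ a₀ a₁ : ℝ) (ha : a₀ ≠ a₁) (u : V → ℝ)
    (heig : ∀ v : V, ∑ᶠ w ∈ {w | G.Adj v w}, u w = θ * u v)
    (hval : ∀ v : V, u v = a₀ ∨ u v = a₁)
    (h0 : ∃ v, u v = a₀) (h1 : ∃ v, u v = a₁) :
    ∃ β₀ γ₁ : ℕ,
      (∀ v : V, u v = a₀ → {w | G.Adj v w ∧ u w = a₁}.ncard = β₀) ∧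
      (∀ v : V, u v = a₁ → {w | G.Adj v w ∧ u w = a₀}.ncard = γ₁) := by
  classical
  have key : ∀ v : V,
      ({w | G.Adj v w ∧ u w = a₀}.ncard : ℝ) * a₀ +
        ({w | G.Adj v w ∧ u w = a₁}.ncard : ℝ) * a₁ = θ * u v ∧
      {w | G.Adj v w ∧ u w = a₀}.ncard + {w | G.Adj v w ∧ u w = a₁}.ncard = m := by
    intro v
    have hfin : {w | G.Adj v w}.Finite := Set.toFinite _
    set N := hfin.toFinset with hN
    have hmemN : ∀ w, w ∈ N ↔ G.Adj v w := by
      intro w; simp [hN, Set.Finite.mem_toFinset]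
    have hsum : ∑ᶠ w ∈ {w | G.Adj v w}, u w = ∑ w ∈ N, u w := by
      rw [← hfin.coe_toFinset, finsum_mem_coe_finset]
    have hset0 : {w | G.Adj v w ∧ u w = a₀} = ↑(N.filter fun w => u w = a₀) := by
      ext w; simp [hmemN]
    have hset1 : {w | G.Adj v w ∧ u w = a₁} = ↑(N.filter fun w => u w = a₁) := by
      ext w; simp [hmemN]
    have hcard0 : {w | G.Adj v w ∧ u w = a₀}.ncard = (N.filter fun w => u w = a₀).card := by
      rw [hset0, Set.ncard_coe_finset]
    have hcard1 : {w | G.Adj v w ∧ u w = a₁}.ncard = (N.filter fun w => u w = a₁).card := by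
      rw [hset1, Set.ncard_coe_finset]
    have hfilter : (N.filter fun w => u w = a₁) = N.filter fun w => ¬ u w = a₀ := by
      apply Finset.filter_congr
      intro w _
      rcases hval w with h | h <;> simp [h, ha, Ne.symm ha]
    constructor
    · have hsplit : ∑ w ∈ N, u w =
          ∑ w ∈ N.filter (fun w => u w = a₀), u w +
          ∑ w ∈ N.filter (fun w => ¬ u w = a₀), u w :=
        (Finset.sum_filter_add_sum_filter_not N _ u).symm
      have h0' : ∑ w ∈ N.filter (fun w => u w = a₀), u w =
          ((N.filter fun w => u w = a₀).card : ℝ) * a₀ := by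
        rw [Finset.sum_congr rfl (fun w hw => (Finset.mem_filter.mp hw).2),
          Finset.sum_const, nsmul_eq_mul]
      have h1' : ∑ w ∈ N.filter (fun w => ¬ u w = a₀), u w =
          ((N.filter fun w => u w = a₁).card : ℝ) * a₁ := by
        rw [hfilter]
        rw [Finset.sum_congr rfl (fun w hw => ?_), Finset.sum_const, nsmul_eq_mul]
        rcases hval w with h | h
        · exact absurd h (Finset.mem_filter.mp hw).2
        · exact h
      rw [hcard0, hcard1, ← h0', ← h1', ← hsplit, ← hsum, heig v]
    · rw [hcard0, hcard1, hfilter, Finset.card_filter_add_card_filter_not]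
      rw [← hreg v]
      simp [hN, Set.ncard_eq_toFinset_card']
  -- counts are determined by the real linear equations
  have ha10 : a₁ - a₀ ≠ 0 := sub_ne_zero.mpr (Ne.symm ha)
  have eq0 : ∀ v : V, u v = a₀ →
      ({w | G.Adj v w ∧ u w = a₁}.ncard : ℝ) * (a₁ - a₀) = (θ - m) * a₀ := by
    intro v hv
    obtain ⟨h1', h2'⟩ := key v
    have h2'' : ({w | G.Adj v w ∧ u w = a₀}.ncard : ℝ) +
        ({w | G.Adj v w ∧ u w = a₁}.ncard : ℝ) = m := by
      exact_mod_cast congrArg (Nat.cast : ℕ → ℝ) h2'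
    rw [hv] at h1'
    linear_combination h1' - a₀ * h2''
  have eq1 : ∀ v : V, u v = a₁ →
      ({w | G.Adj v w ∧ u w = a₀}.ncard : ℝ) * (a₀ - a₁) = (θ - m) * a₁ := by
    intro v hv
    obtain ⟨h1', h2'⟩ := key v
    have h2'' : ({w | G.Adj v w ∧ u w = a₀}.ncard : ℝ) +
        ({w | G.Adj v w ∧ u w = a₁}.ncard : ℝ) = m := by
      exact_mod_cast congrArg (Nat.cast : ℕ → ℝ) h2'
    rw [hv] at h1'
    linear_combination h1' - a₁ * h2''
  obtain ⟨v₀, hv₀⟩ := h0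
  obtain ⟨v₁, hv₁⟩ := h1
  refine ⟨{w | G.Adj v₀ w ∧ u w = a₁}.ncard, {w | G.Adj v₁ w ∧ u w = a₀}.ncard, ?_, ?_⟩
  · intro v hv
    have := (eq0 v hv).trans (eq0 v₀ hv₀).symm
    have h := mul_right_cancel₀ ha10 this
    exact_mod_cast h
  · intro v hv
    have := (eq1 v hv).trans (eq1 v₁ hv₁).symm
    have h := mul_right_cancel₀ (sub_ne_zero.mpr ha) this
    exact_mod_cast h
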